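/- (Hetyei's bound) A graph on 2m vertices with a unique perfect matching has at most m² edges. -/

import Mathlib

open Finset

section

variable {n : ℕ} {G : SimpleGraph (Fin n)} {M : G.Subgraph}

private lemma swap_lemma (hu : ∀ M' : G.Subgraph, M'.IsPerfectMatching → M' = M)
    (f : Fin n → Fin n)
    (hf : ∀ v, M.Adj v (f v)) (hf' : ∀ v w, M.Adj v w → w = f v)
    {a b : Fin n} (hab : G.Adj a b) (hnb : b ≠ f a) :
    ¬ G.Adj (f a) (f b) := by
  intro hfab
  have finv : ∀ v, f (f v) = v := fun v => ((hf' (f v) v (M.adj_symm (hf v)))).symm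
  have hane : a ≠ b := hab.ne
  have hafb : a ≠ f b := fun h => hnb (by rw [h, finv])
  have hfafb : f a ≠ f b := fun h => hane (by rw [← finv a, h, finv])
  have hafa : a ≠ f a := by
    intro h; have h2 := hf a; rw [← h] at h2; exact G.loopless.irrefl a (M.adj_sub h2)
  have hbfb : b ≠ f b := by
    intro h; have h2 := hf b; rw [← h] at h2; exact G.loopless.irrefl b (M.adj_sub h2)
  set s : Set (Fin n) := {a, b, f a, f b} with hs
  have hmem : ∀ v, f v ∈ s → v ∈ s := by
    intro v hv
    simp only [hs, Set.mem_insert_iff, Set.mem_singleton_iff] at hv ⊢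
    rcases hv with h | h | h | h
    · right; right; left; rw [← finv v, h]
    · right; right; right; rw [← finv v, h]
    · left; rw [← finv v, h, finv]
    · right; left; rw [← finv v, h, finv]
  set M' : G.Subgraph :=
    { verts := Set.univ
      Adj := fun x y =>
        ((x = a ∧ y = b) ∨ (x = b ∧ y = a) ∨ (x = f a ∧ y = f b) ∨ (x = f b ∧ y = f a)) ∨
          (M.Adj x y ∧ x ∉ s ∧ y ∉ s)
      adj_sub := by
        rintro x y (((⟨rfl, rfl⟩) | (⟨rfl, rfl⟩) | (⟨rfl, rfl⟩) | (⟨rfl, rfl⟩)) | ⟨h, -, -⟩)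
        · exact hab
        · exact hab.symm
        · exact hfab
        · exact hfab.symm
        · exact M.adj_sub h
      edge_vert := fun _ => Set.mem_univ _
      symm := by
        constructor
        rintro x y (h | ⟨h, h1, h2⟩)
        · left; tauto
        · right; exact ⟨M.adj_symm h, h2, h1⟩ } with hM'
  have hpm : M'.IsPerfectMatching := by
    rw [SimpleGraph.Subgraph.isPerfectMatching_iff]
    intro v
    by_cases hv : v ∈ s
    · rcases hv with rfl | rfl | rfl | rfl
      · refine ⟨b, Or.inl (Or.inl ⟨rfl, rfl⟩), ?_⟩
        rintro y (h | ⟨-, h1, -⟩)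
        · rcases h with ⟨-, rfl⟩ | ⟨h, -⟩ | ⟨h, -⟩ | ⟨h, -⟩
          · rfl
          · exact absurd h hane
          · exact absurd h hafa
          · exact absurd h hafb
        · exact absurd (by simp [hs]) h1
      · refine ⟨a, Or.inl (Or.inr (Or.inl ⟨rfl, rfl⟩)), ?_⟩
        rintro y (h | ⟨-, h1, -⟩)
        · rcases h with ⟨h, -⟩ | ⟨-, rfl⟩ | ⟨h, -⟩ | ⟨h, -⟩
          · exact absurd h hane.symm
          · rfl
          · exact absurd h hnb
          · exact absurd h hbfb
        · exact absurd (by simp [hs]) h1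
      · refine ⟨f b, Or.inl (Or.inr (Or.inr (Or.inl ⟨rfl, rfl⟩))), ?_⟩
        rintro y (h | ⟨-, h1, -⟩)
        · rcases h with ⟨h, -⟩ | ⟨h, -⟩ | ⟨-, rfl⟩ | ⟨h, -⟩
          · exact absurd h hafa.symm
          · exact absurd h hnb.symm
          · rfl
          · exact absurd h hfafb
        · exact absurd (by simp [hs]) h1
      · refine ⟨f a, Or.inl (Or.inr (Or.inr (Or.inr ⟨rfl, rfl⟩))), ?_⟩
        rintro y (h | ⟨-, h1, -⟩)
        · rcases h with ⟨h, -⟩ | ⟨h, -⟩ | ⟨h, -⟩ | ⟨-, rfl⟩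
          · exact absurd h hafb.symm
          · exact absurd h hbfb.symm
          · exact absurd h hfafb.symm
          · rfl
        · exact absurd (by simp [hs]) h1
    · have hfv : f v ∉ s := fun h => hv (hmem v h)
      refine ⟨f v, Or.inr ⟨hf v, hv, hfv⟩, ?_⟩
      rintro y (h | ⟨h, -, -⟩)
      · exact absurd (by rcases h with ⟨h, -⟩ | ⟨h, -⟩ | ⟨h, -⟩ | ⟨h, -⟩ <;> simp [hs, h]) hv
      · exact hf' v y h
  have hMM : M' = M := hu M' hpm
  have hMab : M.Adj a b := by rw [← hMM]; exact Or.inl (Or.inl ⟨rfl, rfl⟩)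
  exact hnb (hf' a b hMab)

end

private lemma eq_of_min_eq_max' {α : Type*} [LinearOrder α] {a b : α}
    (h : min a b = max a b) : a = b :=
  le_antisymm (le_trans (le_max_left a b) (h ▸ min_le_right a b))
    (le_trans (le_max_right a b) (h ▸ min_le_left a b))

private lemma minmax_aux {α : Type*} [LinearOrder α] {p q u v : α}
    (h1 : min p q = min u v) (h2 : max p q = max u v) :
    (p = u ∧ q = v) ∨ (p = v ∧ q = u) := by
  rcases le_total p q with h | h <;> rcases le_total u v with h' | h'
  · rw [min_eq_left h, min_eq_left h'] at h1
    rw [max_eq_right h, max_eq_right h'] at h2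
    exact Or.inl ⟨h1, h2⟩
  · rw [min_eq_left h, min_eq_right h'] at h1
    rw [max_eq_right h, max_eq_left h'] at h2
    exact Or.inr ⟨h1, h2⟩
  · rw [min_eq_right h, min_eq_left h'] at h1
    rw [max_eq_left h, max_eq_right h'] at h2
    exact Or.inr ⟨h2, h1⟩
  · rw [min_eq_right h, min_eq_right h'] at h1
    rw [max_eq_left h, max_eq_left h'] at h2
    exact Or.inl ⟨h2, h1⟩

theorem stmt_14 (m : ℕ) (G : SimpleGraph (Fin (2 * m))) [DecidableRel G.Adj]
    (h : ∃! M : G.Subgraph, M.IsPerfectMatching) :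
    G.edgeFinset.card ≤ m ^ 2 := by
  classical
  obtain ⟨M, hM, hu⟩ := h
  have hM' := (SimpleGraph.Subgraph.isPerfectMatching_iff).mp hM
  set f : Fin (2 * m) → Fin (2 * m) := fun v => (hM' v).choose with hfdef
  have hf : ∀ v, M.Adj v (f v) := fun v => (hM' v).choose_spec.1
  have hf' : ∀ v w, M.Adj v w → w = f v := fun v w hvw => (hM' v).choose_spec.2 w hvw
  have finv : ∀ v, f (f v) = v := fun v => ((hf' (f v) v (M.adj_symm (hf v)))).symm
  have hinj : Function.Injective f := fun a b hab => by rw [← finv a, hab, finv]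
  have fne : ∀ v, v ≠ f v := by
    intro v hv; have h2 := hf v; rw [← hv] at h2; exact G.loopless.irrefl v (M.adj_sub h2)
  have htf : ∀ v, (f v < f (f v)) ↔ ¬ (v < f v) := by
    intro v; rw [finv]
    constructor
    · exact fun h1 h2 => lt_asymm h1 h2
    · exact fun h1 => lt_of_le_of_ne (not_lt.mp h1) (Ne.symm (fne v))
  set r : Fin (2 * m) → Fin (2 * m) := fun v => min v (f v) with hrdef
  have hrpair : ∀ v w, r v = r w → w = v ∨ w = f v := by
    intro v w hvw
    rcases min_choice v (f v) with h1 | h1 <;> rcases min_choice w (f w) with h2 | h2 <;>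
      rw [show r v = min v (f v) from rfl, show r w = min w (f w) from rfl, h1, h2] at hvw
    · exact Or.inl hvw.symm
    · exact Or.inr (by rw [hvw, finv])
    · exact Or.inr hvw.symm
    · exact Or.inl (hinj hvw).symm
  have hrS : ∀ v, r v < f (r v) := by
    intro v
    rcases le_total v (f v) with h1 | h1
    · rw [show r v = v from min_eq_left h1]
      exact lt_of_le_of_ne h1 (fne v)
    · rw [show r v = f v from min_eq_right h1, finv]
      exact lt_of_le_of_ne h1 (Ne.symm (fne v))
  have hrf : ∀ v, r (f v) = r v := by
    intro v; show min (f v) (f (f v)) = min v (f v); rw [finv, min_comm]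
  -- the set of representatives
  set S : Finset (Fin (2 * m)) := univ.filter (fun v => v < f v) with hSdef
  have hSmem : ∀ v, r v ∈ S := by
    intro v; rw [hSdef, Finset.mem_filter]; exact ⟨Finset.mem_univ _, hrS v⟩
  have hScard : S.card = m := by
    have hc1 : S.card + (univ.filter (fun v => ¬ v < f v)).card = 2 * m := by
      rw [hSdef, Finset.card_filter_add_card_filter_not]
      simp
    have hc2 : (univ.filter (fun v => ¬ v < f v)).card = S.card := by
      apply Finset.card_bij (fun v _ => f v)
      · intro a ha
        simp only [hSdef, Finset.mem_filter, Finset.mem_univ, true_and] at ha ⊢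
        rw [finv]
        exact lt_of_le_of_ne (not_lt.mp ha) (Ne.symm (fne a))
      · intro a _ b _ hab; exact hinj hab
      · intro b hb
        simp only [hSdef, Finset.mem_filter, Finset.mem_univ, true_and] at hb ⊢
        exact ⟨f b, fun hlt => lt_asymm hb (by rwa [finv] at hlt), finv b⟩
    omega
  -- the labelling map
  set φ : Sym2 (Fin (2 * m)) → Fin (2 * m) × Fin (2 * m) := Sym2.lift
    ⟨fun x y =>
      if (x < f x ↔ y < f y) then (min (r x) (r y), max (r x) (r y))
      else (max (r x) (r y), min (r x) (r y)), by
      intro x y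
      dsimp only
      by_cases hc : x < f x ↔ y < f y
      · rw [if_pos hc, if_pos hc.symm, min_comm, max_comm]
      · rw [if_neg hc, if_neg (fun hcc => hc hcc.symm), min_comm, max_comm]⟩ with hφ
  have hφmk : ∀ x y, φ s(x, y) =
      if (x < f x ↔ y < f y) then (min (r x) (r y), max (r x) (r y))
      else (max (r x) (r y), min (r x) (r y)) := by
    intro x y; rw [hφ, Sym2.lift_mk]
  have hφm : ∀ x, φ s(x, f x) = (r x, r x) := by
    intro x
    rw [hφmk]
    have hc : ¬ (x < f x ↔ f x < f (f x)) := by rw [htf x]; tauto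
    rw [if_neg hc, hrf, max_self, min_self]
  have key : G.edgeFinset.card ≤ (S ×ˢ S).card := by
    apply Finset.card_le_card_of_injOn φ
    · intro e he
      induction e using Sym2.ind with
      | _ x y =>
        rw [hφmk]
        have hmin : min (r x) (r y) ∈ S := by
          rcases min_choice (r x) (r y) with h1 | h1 <;> rw [h1] <;> exact hSmem _
        have hmax : max (r x) (r y) ∈ S := by
          rcases max_choice (r x) (r y) with h1 | h1 <;> rw [h1] <;> exact hSmem _
        split <;> exact Finset.mem_product.mpr ⟨by assumption, by assumption⟩
    · intro e1 he1 e2 he2 heq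
      induction e1 using Sym2.ind with
      | _ x y =>
      induction e2 using Sym2.ind with
      | _ z w =>
      have hxy : G.Adj x y := by simpa using he1
      have hzw : G.Adj z w := by simpa using he2
      by_cases hyx : y = f x
      · by_cases hwz : w = f z
        · subst hyx hwz
          rw [hφm, hφm, Prod.mk.injEq] at heq
          rcases hrpair x z heq.1 with rfl | hz
          · rfl
          · subst hz; rw [finv]; exact Sym2.eq_swap
        · exfalso
          have hrzw : r z ≠ r w := by
            intro hr
            rcases hrpair z w hr with h1 | h1
            · exact hzw.ne' h1
            · exact hwz h1
          subst hyx
          rw [hφm, hφmk] at heq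
          split_ifs at heq with hc <;> rw [Prod.mk.injEq] at heq
          · exact hrzw (eq_of_min_eq_max' (heq.1.symm.trans heq.2))
          · exact hrzw (eq_of_min_eq_max' (heq.2.symm.trans heq.1))
      · have hrxy : r x ≠ r y := by
          intro hr
          rcases hrpair x y hr with h1 | h1
          · exact hxy.ne' h1
          · exact hyx h1
        by_cases hwz : w = f z
        · exfalso
          subst hwz
          rw [hφm, hφmk] at heq
          split_ifs at heq with hc <;> rw [Prod.mk.injEq] at heq
          · exact hrxy (eq_of_min_eq_max' (heq.1.trans heq.2.symm))
          · exact hrxy (eq_of_min_eq_max' (heq.2.trans heq.1.symm))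
        · -- both non-matching
          have hrzw : r z ≠ r w := by
            intro hr
            rcases hrpair z w hr with h1 | h1
            · exact hzw.ne' h1
            · exact hwz h1
          rw [hφmk, hφmk] at heq
          split_ifs at heq with hc1 hc2 hc2 <;> rw [Prod.mk.injEq] at heq
          · -- both conditions true
            rcases minmax_aux heq.1 heq.2 with ⟨e1, e2⟩ | ⟨e1, e2⟩
            · rcases hrpair x z e1 with rfl | hz
              · rcases hrpair y w e2 with rfl | hw
                · rfl
                · exfalso; subst hw; rw [htf y] at hc2; tauto
              · subst hz
                rcases hrpair y w e2 with rfl | hw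
                · exfalso; rw [htf x] at hc2; tauto
                · exfalso; subst hw
                  exact (swap_lemma hu f hf hf' hxy hyx) hzw
            · rcases hrpair y z e2 with rfl | hz
              · rcases hrpair x w e1 with rfl | hw
                · exact Sym2.eq_swap
                · exfalso; subst hw; rw [htf x] at hc2; tauto
              · subst hz
                rcases hrpair x w e1 with rfl | hw
                · exfalso; rw [htf y] at hc2; tauto
                · exfalso; subst hw
                  exact (swap_lemma hu f hf hf' hxy hyx) hzw.symm
          · -- mixed: impossible
            exfalso
            have hle : max (r z) (r w) ≤ min (r z) (r w) := by
              have := min_le_max (a := r x) (b := r y)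
              rwa [heq.1, heq.2] at this
            exact hrzw (eq_of_min_eq_max' (le_antisymm min_le_max hle))
          · exfalso
            have hle : min (r z) (r w) ≤ max (r z) (r w) := min_le_max
            have hle2 : max (r x) (r y) ≤ min (r x) (r y) := by
              have := min_le_max (a := r z) (b := r w)
              rwa [← heq.1, ← heq.2] at this
            exact hrxy (eq_of_min_eq_max' (le_antisymm min_le_max hle2))
          · -- both conditions false
            rcases minmax_aux heq.2 heq.1 with ⟨e1, e2⟩ | ⟨e1, e2⟩
            · rcases hrpair x z e1 with rfl | hz
              · rcases hrpair y w e2 with rfl | hw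
                · rfl
                · exfalso; subst hw; rw [htf y] at hc2; tauto
              · subst hz
                rcases hrpair y w e2 with rfl | hw
                · exfalso; rw [htf x] at hc2; tauto
                · exfalso; subst hw
                  exact (swap_lemma hu f hf hf' hxy hyx) hzw
            · rcases hrpair y z e2 with rfl | hz
              · rcases hrpair x w e1 with rfl | hw
                · exact Sym2.eq_swap
                · exfalso; subst hw; rw [htf x] at hc2; tauto
              · subst hz
                rcases hrpair x w e1 with rfl | hw
                · exfalso; rw [htf y] at hc2; tauto
                · exfalso; subst hw
                  exact (swap_lemma hu f hf hf' hxy hyx) hzw.symm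
  calc G.edgeFinset.card ≤ (S ×ˢ S).card := key
    _ = m ^ 2 := by rw [Finset.card_product, hScard, pow_two]
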